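/- Let τ be a finite relational signature with maximal arity m, let n and k be natural numbers. Then there exists a number R such that for every τ-structure S with domain A of size at least R, every k-tuple d over A, and every linear order ≺ on A, there is a subset B of A of size n, disjoint from the entries of d, such that for every l ≤ m, all ≺-increasing l-tuples a over B satisfy: the atomic type of (a, d) in S is the same. -/

import Mathlib

/-- Two `l`-tuples over a relational structure (given by the interpretation `interp`
of the relation symbols `R` with arities `ar`) have the same atomic type: they satisfy
the same equalities and the same relational atoms. -/
def SameType {X R : Type} (ar : R → ℕ) (interp : ∀ r, (Fin (ar r) → X) → Prop)
    {l : ℕ} (v w : Fin l → X) : Prop :=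
  (∀ i j, v i = v j ↔ w i = w j) ∧
  ∀ (r : R) (ι : Fin (ar r) → Fin l), (interp r (v ∘ ι) ↔ interp r (w ∘ ι))

/-- A tuple is increasing with respect to a strict order `prec`. -/
def IncreasingWrt {X : Type} (prec : X → X → Prop) {l : ℕ} (a : Fin l → X) : Prop :=
  ∀ i j : Fin l, i < j → prec (a i) (a j)

/-- Pre-homogeneous sequence lemma. -/
theorem preHom (κ : Type) [Fintype κ] [Nonempty κ] (m : ℕ)
    (IH : ∀ n : ℕ, ∃ N : ℕ, ∀ (X : Type) [DecidableEq X] (C : Finset X → κ) (A : Finset X),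
      N ≤ A.card → ∃ B : Finset X, B ⊆ A ∧ B.card = n ∧ ∃ c,
        ∀ s ⊆ B, s.card = m → C s = c) :
    ∀ t : ℕ, ∃ N : ℕ, ∀ (X : Type) [DecidableEq X] (C : Finset X → κ) (A : Finset X),
      N ≤ A.card → ∃ (a : Fin t → X) (g : Fin t → κ),
        Function.Injective a ∧ (∀ i, a i ∈ A) ∧
        ∀ (i : Fin t) (s : Finset X), s.card = m →
          (∀ x ∈ s, ∃ j, i < j ∧ x = a j) → C (insert (a i) s) = g i := by
  intro t
  induction t with
  | zero =>
    refine ⟨0, fun X _ C A _ => ⟨Fin.elim0, Fin.elim0, ?_, ?_, ?_⟩⟩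
    · intro i; exact i.elim0
    · intro i; exact i.elim0
    · intro i; exact i.elim0
  | succ t iht =>
    obtain ⟨Nt, hNt⟩ := iht
    obtain ⟨Nm, hNm⟩ := IH Nt
    refine ⟨Nm + 1, fun X _ C A hA => ?_⟩
    have hAne : A.Nonempty := Finset.card_pos.mp (by omega)
    obtain ⟨a₀, ha₀⟩ := hAne
    have hcard : Nm ≤ (A.erase a₀).card := by
      rw [Finset.card_erase_of_mem ha₀]; omega
    obtain ⟨B, hBA, hBcard, c₀, hc₀⟩ := hNm X (fun s => C (insert a₀ s)) (A.erase a₀) hcard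
    obtain ⟨a, g, hainj, hamem, hacond⟩ := hNt X C B (le_of_eq hBcard.symm)
    have haB : ∀ i, a i ≠ a₀ := fun i h =>
      Finset.ne_of_mem_erase (hBA (hamem i)) h
    refine ⟨Fin.cases a₀ a, Fin.cases c₀ g, ?_, ?_, ?_⟩
    · intro i j hij
      induction i using Fin.cases with
      | zero =>
        induction j using Fin.cases with
        | zero => rfl
        | succ j =>
          simp only [Fin.cases_zero, Fin.cases_succ] at hij
          exact absurd hij.symm (haB j)
      | succ i =>
        induction j using Fin.cases with
        | zero =>
          simp only [Fin.cases_zero, Fin.cases_succ] at hij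
          exact absurd hij (haB i)
        | succ j => simp only [Fin.cases_succ] at hij
                    exact congrArg Fin.succ (hainj hij)
    · intro i
      induction i using Fin.cases with
      | zero => simpa using ha₀
      | succ i => simpa using Finset.mem_of_mem_erase (hBA (hamem i))
    · intro i s hs hmem
      induction i using Fin.cases with
      | zero =>
        have hsB : s ⊆ B := by
          intro x hx
          obtain ⟨j, hj0, rfl⟩ := hmem x hx
          induction j using Fin.cases with
          | zero => exact absurd hj0 (lt_irrefl _)
          | succ j => simpa using hamem j
        simpa using hc₀ s hsB hs
      | succ i =>
        simp only [Fin.cases_succ]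
        refine hacond i s hs ?_
        intro x hx
        obtain ⟨j, hij, rfl⟩ := hmem x hx
        induction j using Fin.cases with
        | zero => exact absurd hij (Fin.not_lt.mpr (Fin.zero_le _))
        | succ j =>
          refine ⟨j, Fin.succ_lt_succ_iff.mp hij, ?_⟩
          simp only [Fin.cases_succ]

/-- Finite hypergraph Ramsey theorem: colorings of `m`-subsets. -/
theorem myRamsey (κ : Type) [Fintype κ] [Nonempty κ] (m : ℕ) :
    ∀ n : ℕ, ∃ N : ℕ, ∀ (X : Type) [DecidableEq X] (C : Finset X → κ) (A : Finset X),
      N ≤ A.card → ∃ B : Finset X, B ⊆ A ∧ B.card = n ∧ ∃ c,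
        ∀ s ⊆ B, s.card = m → C s = c := by
  induction m with
  | zero =>
    intro n
    refine ⟨n, fun X _ C A hA => ?_⟩
    obtain ⟨B, hBA, hBcard⟩ := Finset.exists_subset_card_eq hA
    refine ⟨B, hBA, hBcard, C ∅, fun s _ hs => ?_⟩
    rw [Finset.card_eq_zero.mp hs]
  | succ m ihm =>
    intro n
    obtain ⟨Np, hNp⟩ := preHom κ m ihm (Fintype.card κ * n + 1)
    refine ⟨Np, fun X _ C A hA => ?_⟩
    letI : DecidableEq κ := Classical.decEq κ
    obtain ⟨a, g, hainj, hamem, hacond⟩ := hNp X C A hA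
    obtain ⟨c, hc⟩ := Fintype.exists_lt_card_fiber_of_mul_lt_card (f := g) (n := n)
      (by simp only [Fintype.card_fin]; omega)
    obtain ⟨I, hIfib, hIcard⟩ :=
      Finset.exists_subset_card_eq (le_of_lt hc)
    refine ⟨I.image a, ?_, ?_, c, ?_⟩
    · intro x hx
      obtain ⟨i, _, rfl⟩ := Finset.mem_image.mp hx
      exact hamem i
    · rw [Finset.card_image_of_injective _ hainj, hIcard]
    · intro s hsB hs
      have hJ : ∀ x ∈ s, ∃ i ∈ I, a i = x := by
        intro x hx
        exact Finset.mem_image.mp (hsB hx)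
      set J : Finset (Fin _) := I.filter (fun i => a i ∈ s) with hJdef
      have hsJ : s = J.image a := by
        apply Finset.Subset.antisymm
        · intro x hx
          obtain ⟨i, hiI, rfl⟩ := hJ x hx
          exact Finset.mem_image_of_mem a (Finset.mem_filter.mpr ⟨hiI, hx⟩)
        · intro x hx
          obtain ⟨i, hiJ, rfl⟩ := Finset.mem_image.mp hx
          exact (Finset.mem_filter.mp hiJ).2
      have hJcard : J.card = m + 1 := by
        rw [hsJ, Finset.card_image_of_injective _ hainj] at hs
        exact hs
      have hJne : J.Nonempty := Finset.card_pos.mp (by omega)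
      set i₀ := J.min' hJne with hi₀
      have hi₀J : i₀ ∈ J := J.min'_mem hJne
      set rest : Finset X := (J.erase i₀).image a with hrest
      have hrestcard : rest.card = m := by
        rw [hrest, Finset.card_image_of_injective _ hainj,
          Finset.card_erase_of_mem hi₀J, hJcard]
        omega
      have hins : insert (a i₀) rest = s := by
        rw [hsJ, hrest, ← Finset.image_insert, Finset.insert_erase hi₀J]
      have := hacond i₀ rest hrestcard ?_
      · rw [hins] at this
        rw [this]
        have : i₀ ∈ Finset.univ.filter (fun i => g i = c) := hIfib (Finset.mem_filter.mp hi₀J).1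
        exact (Finset.mem_filter.mp this).2
      · intro x hx
        obtain ⟨j, hjJ, rfl⟩ := Finset.mem_image.mp hx
        refine ⟨j, ?_, rfl⟩
        exact lt_of_le_of_ne (J.min'_le j (Finset.mem_of_mem_erase hjJ))
          (Ne.symm (Finset.ne_of_mem_erase hjJ))

/-- **Ramsey's theorem for relational structures with parameters.** For a finite
relational signature of maximal arity `m` and naturals `n`, `k` there is `N` such that
for every structure with domain of size at least `N`, every `k`-tuple `d` of parameters
and every linear (strict total) order `≺`, there is a set `B` of size `n` disjoint from
`d` such that for every `l ≤ m` all `≺`-increasing `l`-tuples `a` over `B` give tuples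
`(a, d)` of the same atomic type. -/

theorem ramsey_structures (R : Type) [Fintype R] (ar : R → ℕ) (m : ℕ)
    (har : ∀ r, ar r ≤ m) (n k : ℕ) :
    ∃ N : ℕ, ∀ (X : Type) [Fintype X] (interp : ∀ r, (Fin (ar r) → X) → Prop),
      N ≤ Fintype.card X → ∀ (d : Fin k → X)
      (prec : X → X → Prop), IsStrictTotalOrder X prec →
      ∃ B : Finset X, B.card = n ∧ (∀ i, d i ∉ B) ∧
        ∀ l, l ≤ m → ∀ a b : Fin l → X,
          (∀ i, a i ∈ B) → (∀ i, b i ∈ B) →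
          IncreasingWrt prec a → IncreasingWrt prec b →
          SameType ar interp (Fin.append a d) (Fin.append b d) := by
  classical
  letI : DecidableEq R := Classical.decEq R
  set κ := (Fin (m + k) → Fin (m + k) → Prop) ×
    ((r : R) → (Fin (ar r) → Fin (m + k)) → Prop) with hκ
  haveI : Nonempty κ := ⟨fun _ _ => True, fun _ _ => True⟩
  obtain ⟨Nr, hNr⟩ := myRamsey κ m (n + m)
  refine ⟨Nr + k, ?_⟩
  intro X _ interp hX d prec hsto
  letI : IsStrictTotalOrder X prec := hsto
  letI : DecidableRel prec := Classical.decRel prec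
  letI lo : LinearOrder X := linearOrderOfSTO prec
  -- the color of an m-tuple
  set col : (Fin m → X) → κ := fun e =>
    ⟨fun i j => Fin.append e d i = Fin.append e d j,
     fun r ι => interp r (fun q => Fin.append e d (ι q))⟩ with hcoldef
  set C : Finset X → κ := fun s =>
    if h : s.card = m then col (s.orderEmbOfFin h)
    else ⟨fun _ _ => True, fun _ _ => True⟩ with hCdef
  set A : Finset X := Finset.univ \ Finset.image d Finset.univ with hAdef
  have hAcard : Nr ≤ A.card := by
    have h1 : A.card = Fintype.card X - (Finset.image d Finset.univ).card := by
      rw [hAdef, Finset.card_sdiff_of_subset (Finset.subset_univ _), Finset.card_univ]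
    have h2 : (Finset.image d Finset.univ).card ≤ k := by
      refine le_trans (Finset.card_image_le) ?_
      simp
    omega
  obtain ⟨H, hHA, hHcard, c, hhom⟩ := hNr X C A hAcard
  set eH := H.orderEmbOfFin hHcard with heHdef
  set B : Finset X := Finset.image (fun i : Fin n => eH (Fin.castAdd m i)) Finset.univ
    with hBdef
  have hBH : B ⊆ H := by
    intro x hx
    obtain ⟨i, _, rfl⟩ := Finset.mem_image.mp hx
    exact H.orderEmbOfFin_mem hHcard _
  have hBcard : B.card = n := by
    rw [hBdef, Finset.card_image_of_injective _
      (fun i j h => Fin.castAdd_injective n m (eH.injective h)), Finset.card_univ,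
      Fintype.card_fin]
  have hBlt : ∀ x ∈ B, ∀ t : Fin (n + m), n ≤ (t : ℕ) → prec x (eH t) := by
    intro x hx t ht
    obtain ⟨i, _, rfl⟩ := Finset.mem_image.mp hx
    exact eH.strictMono (by simp [Fin.lt_def]; omega)
  refine ⟨B, hBcard, ?_, ?_⟩
  · intro i hi
    have : d i ∈ A := hHA (hBH hi)
    rw [hAdef, Finset.mem_sdiff] at this
    exact this.2 (Finset.mem_image_of_mem d (Finset.mem_univ i))
  intro l hlm a b ha hb hainc hbinc
  -- extension of an increasing l-tuple over B to an increasing m-tuple over H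
  have ext : ∀ (a : Fin l → X), (∀ i, a i ∈ B) → IncreasingWrt prec a →
      ∃ a' : Fin m → X, (∀ i₁ : Fin l, a' (Fin.castLE hlm i₁) = a i₁) ∧
        col a' = c := by
    intro a ha hainc
    set a' : Fin m → X := fun i =>
      if h : (i : ℕ) < l then a ⟨i, h⟩
      else eH ⟨n + ((i : ℕ) - l), by omega⟩ with ha'def
    have hstrict : StrictMono a' := by
      intro i j hij
      rw [Fin.lt_def] at hij
      rw [ha'def]
      dsimp only
      by_cases hi : (i : ℕ) < l
      · by_cases hj : (j : ℕ) < l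
        · rw [dif_pos hi, dif_pos hj]
          exact hainc ⟨i, hi⟩ ⟨j, hj⟩ (Fin.mk_lt_mk.mpr (by omega))
        · rw [dif_pos hi, dif_neg hj]
          exact hBlt _ (ha ⟨i, hi⟩) _ (by simp)
      · have hj : ¬ (j : ℕ) < l := by omega
        rw [dif_neg hi, dif_neg hj]
        exact eH.strictMono (by simp [Fin.lt_def]; omega)
    have hmem : ∀ i, a' i ∈ H := by
      intro i
      rw [ha'def]
      dsimp only
      by_cases hi : (i : ℕ) < l
      · rw [dif_pos hi]; exact hBH (ha ⟨i, hi⟩)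
      · rw [dif_neg hi]; exact H.orderEmbOfFin_mem hHcard _
    have hsub : Finset.image a' Finset.univ ⊆ H := by
      intro x hx
      obtain ⟨i, _, rfl⟩ := Finset.mem_image.mp hx
      exact hmem i
    have hcard : (Finset.image a' Finset.univ).card = m := by
      rw [Finset.card_image_of_injective _ hstrict.injective, Finset.card_univ,
        Fintype.card_fin]
    have hC : C (Finset.image a' Finset.univ) = c := hhom _ hsub hcard
    rw [hCdef] at hC
    dsimp only at hC
    rw [dif_pos hcard] at hC
    have henum : ((Finset.image a' Finset.univ).orderEmbOfFin hcard : Fin m → X) = a' := by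
      symm
      exact Finset.orderEmbOfFin_unique hcard
        (fun i => Finset.mem_image_of_mem a' (Finset.mem_univ i)) hstrict
    rw [henum] at hC
    refine ⟨a', ?_, hC⟩
    intro i₁
    rw [ha'def]
    dsimp only
    rw [dif_pos (by exact i₁.isLt : ((Fin.castLE hlm i₁ : Fin m) : ℕ) < l)]
    exact congrArg a (Fin.ext rfl)
  obtain ⟨a', ha', hca⟩ := ext a ha hainc
  obtain ⟨b', hb', hcb⟩ := ext b hb hbinc
  have hcol : col a' = col b' := by rw [hca, hcb]
  -- index translation
  set ρ : Fin (l + k) → Fin (m + k) := fun i =>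
    Fin.addCases (fun i₁ : Fin l => Fin.castAdd k (Fin.castLE hlm i₁))
      (fun i₂ : Fin k => Fin.natAdd m i₂) i with hρdef
  have key : ∀ (u : Fin l → X) (u' : Fin m → X),
      (∀ i₁ : Fin l, u' (Fin.castLE hlm i₁) = u i₁) →
      ∀ i : Fin (l + k), Fin.append u d i = Fin.append u' d (ρ i) := by
    intro u u' hu i
    refine Fin.addCases ?_ ?_ i
    · intro i₁
      rw [Fin.append_left, hρdef]
      dsimp only
      rw [Fin.addCases_left, Fin.append_left, hu]
    · intro i₂
      rw [Fin.append_right, hρdef]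
      dsimp only
      rw [Fin.addCases_right, Fin.append_right]
  have heqs : ∀ i j : Fin (m + k),
      (Fin.append a' d i = Fin.append a' d j) ↔ (Fin.append b' d i = Fin.append b' d j) :=
    fun i j => iff_of_eq (congrFun (congrFun (congrArg Prod.fst hcol) i) j)
  have hrel : ∀ (r : R) (ι : Fin (ar r) → Fin (m + k)),
      interp r (fun q => Fin.append a' d (ι q)) ↔
      interp r (fun q => Fin.append b' d (ι q)) :=
    fun r ι => iff_of_eq (congrFun (congrFun (congrArg Prod.snd hcol) r) ι)
  refine ⟨?_, ?_⟩
  · intro i j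
    rw [key a a' ha' i, key a a' ha' j, key b b' hb' i, key b b' hb' j]
    exact heqs (ρ i) (ρ j)
  · intro r ι
    have hca' : (Fin.append a d ∘ ι) = fun q => Fin.append a' d (ρ (ι q)) :=
      funext fun q => key a a' ha' (ι q)
    have hcb' : (Fin.append b d ∘ ι) = fun q => Fin.append b' d (ρ (ι q)) :=
      funext fun q => key b b' hb' (ι q)
    rw [hca', hcb']
    exact hrel r (fun q => ρ (ι q))
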